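/- For all m₁, m₂ ∈ ℝ, v > 0 and γ ≥ 1, the E_γ-divergence between two Laplace distributions with the same scale satisfies E_γ(L(m₁,v) ‖ L(m₂,v)) = max{0, 1 − exp((v·log γ − |m₁ − m₂|)/(2v))}. -/

import Mathlib

open MeasureTheory ProbabilityTheory Real

noncomputable def Egamma {Y : Type*} [MeasurableSpace Y] (γ : ℝ) (P Q : Measure Y) : ℝ :=
  ⨆ A : {A : Set Y // MeasurableSet A}, ((P A.1).toReal - γ * (Q A.1).toReal)

/-- The Laplace distribution on `ℝ` with mean `m` and scale `v` (variance `2v²`). -/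
noncomputable def laplaceMeasure (m v : ℝ) : Measure ℝ :=
  volume.withDensity fun t => ENNReal.ofReal ((1 / (2 * v)) * Real.exp (-|t - m| / v))

namespace LapAux

open Set Filter Topology

/-- The Laplace density. -/
noncomputable def lapd (m v t : ℝ) : ℝ := (1 / (2 * v)) * Real.exp (-|t - m| / v)

lemma lapd_pos {v : ℝ} (hv : 0 < v) (m t : ℝ) : 0 < lapd m v t := by
  unfold lapd; positivity

lemma lapd_cont (m v : ℝ) : Continuous (lapd m v) := by
  unfold lapd
  fun_prop

lemma lapd_neg (m v t : ℝ) : lapd (-m) v (-t) = lapd m v t := by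
  unfold lapd
  rw [show (-t) - (-m) = -(t - m) by ring, abs_neg]

lemma hasDeriv_right {v : ℝ} (hv : 0 < v) (m x : ℝ) :
    HasDerivAt (fun t => -(1/2) * Real.exp ((m - t) / v))
      ((1 / (2*v)) * Real.exp ((m - x)/v)) x := by
  have h1 : HasDerivAt (fun t : ℝ => (m - t) / v) (-1 / v) x := by
    simpa using ((hasDerivAt_id x).const_sub m).div_const v
  have h2 := (h1.exp).const_mul (-(1/2) : ℝ)
  refine h2.congr_deriv ?_
  ring

lemma hasDeriv_left {v : ℝ} (hv : 0 < v) (m x : ℝ) :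
    HasDerivAt (fun t => (1/2) * Real.exp ((t - m) / v))
      ((1 / (2*v)) * Real.exp ((x - m)/v)) x := by
  have h1 : HasDerivAt (fun t : ℝ => (t - m) / v) (1 / v) x := by
    simpa using ((hasDerivAt_id x).sub_const m).div_const v
  have h2 := (h1.exp).const_mul ((1/2) : ℝ)
  refine h2.congr_deriv ?_
  ring

lemma tendsto_right {v : ℝ} (hv : 0 < v) (m : ℝ) :
    Tendsto (fun t => -(1/2) * Real.exp ((m - t) / v)) atTop (𝓝 0) := by
  have h0 : Tendsto (fun t : ℝ => m - t) atTop atBot := by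
    simpa [sub_eq_add_neg] using
      tendsto_atBot_add_const_left atTop m (tendsto_neg_atTop_atBot : Tendsto (fun x : ℝ => -x) atTop atBot)
  have h : Tendsto (fun t : ℝ => (m - t) / v) atTop atBot := h0.atBot_div_const hv
  have h2 := (Real.tendsto_exp_atBot).comp h
  have h3 := h2.const_mul (-(1/2) : ℝ)
  simpa using h3

lemma eq_on_right {m v a : ℝ} (h : m ≤ a) :
    EqOn (lapd m v) (fun t => (1/(2*v)) * Real.exp ((m - t)/v)) (Ioi a) := by
  intro t ht
  have ht' : a < t := ht
  unfold lapd
  rw [abs_of_nonneg (by linarith : (0:ℝ) ≤ t - m), neg_sub]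

lemma integrableOn_Ioi_lapd {m v a : ℝ} (hv : 0 < v) (h : m ≤ a) :
    IntegrableOn (lapd m v) (Ioi a) := by
  have hint : IntegrableOn (fun x => (1 / (2*v)) * Real.exp ((m - x)/v)) (Ioi a) :=
    integrableOn_Ioi_deriv_of_nonneg' (fun x _ => hasDeriv_right hv m x)
      (fun x _ => by positivity) (tendsto_right hv m)
  exact hint.congr_fun (fun t ht => ((eq_on_right h) ht).symm) measurableSet_Ioi

lemma integral_Ioi_right {m v a : ℝ} (hv : 0 < v) (h : m ≤ a) :
    ∫ t in Ioi a, lapd m v t = (1/2) * Real.exp ((m - a)/v) := by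
  rw [setIntegral_congr_fun measurableSet_Ioi (eq_on_right h)]
  rw [integral_Ioi_of_hasDerivAt_of_nonneg' (fun x _ => hasDeriv_right hv m x)
    (fun x _ => by positivity) (tendsto_right hv m)]
  ring

lemma integral_Ioc_lapd {m v a : ℝ} (hv : 0 < v) (h : a ≤ m) :
    ∫ t in Ioc a m, lapd m v t = 1/2 - (1/2) * Real.exp ((a - m)/v) := by
  rw [← intervalIntegral.integral_of_le h]
  have heq : EqOn (lapd m v) (fun t => (1/(2*v)) * Real.exp ((t - m)/v)) (Set.uIcc a m) := by
    intro t ht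
    rw [Set.uIcc_of_le h] at ht
    unfold lapd
    rw [abs_of_nonpos (by linarith [ht.2] : t - m ≤ 0), neg_neg]
  rw [intervalIntegral.integral_congr heq]
  rw [intervalIntegral.integral_eq_sub_of_hasDerivAt (fun x _ => hasDeriv_left hv m x)
    (Continuous.intervalIntegrable (by fun_prop) a m)]
  rw [sub_self, zero_div, Real.exp_zero]
  ring

lemma integral_Ioi_left {m v a : ℝ} (hv : 0 < v) (h : a ≤ m) :
    ∫ t in Ioi a, lapd m v t = 1 - (1/2) * Real.exp ((a - m)/v) := by
  rw [← Ioc_union_Ioi_eq_Ioi h,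
    setIntegral_union (Ioc_disjoint_Ioi le_rfl) measurableSet_Ioi
      ((lapd_cont m v).integrableOn_Ioc) (integrableOn_Ioi_lapd hv le_rfl),
    integral_Ioc_lapd hv h, integral_Ioi_right hv le_rfl, sub_self, zero_div, Real.exp_zero]
  ring

lemma integrable_lapd {v : ℝ} (hv : 0 < v) (m : ℝ) : Integrable (lapd m v) := by
  rw [← integrableOn_univ, ← Set.Iio_union_Ici (a := m), integrableOn_union,
    integrableOn_Ici_iff_integrableOn_Ioi]
  constructor
  · have h0 : IntegrableOn (lapd (-m) v) (Ioi (-m)) := integrableOn_Ioi_lapd hv le_rfl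
    have h1 : IntegrableOn (lapd (-m) v ∘ Neg.neg) (Neg.neg ⁻¹' (Ioi (-m))) :=
      ((Measure.measurePreserving_neg (volume : Measure ℝ)).integrableOn_comp_preimage
        (Homeomorph.neg ℝ).measurableEmbedding).2 h0
    have hset : (Neg.neg ⁻¹' (Ioi (-m)) : Set ℝ) = Iio m := by
      ext x
      simp [Set.mem_preimage, neg_lt_neg_iff]
    rw [hset] at h1
    exact h1.congr_fun (fun t _ => by simpa using lapd_neg m v t) measurableSet_Iio
  · exact integrableOn_Ioi_lapd hv le_rfl

lemma lap_apply {v : ℝ} (hv : 0 < v) {A : Set ℝ} (hA : MeasurableSet A) (m : ℝ) :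
    ((laplaceMeasure m v) A).toReal = ∫ t in A, lapd m v t := by
  rw [laplaceMeasure, withDensity_apply _ hA]
  have h1 : ∫⁻ t in A, ENNReal.ofReal (lapd m v t) = ENNReal.ofReal (∫ t in A, lapd m v t) :=
    (ofReal_integral_eq_lintegral_ofReal ((integrable_lapd hv m).integrableOn)
      (Filter.Eventually.of_forall fun t => (lapd_pos hv m t).le)).symm
  have h2 : (fun t : ℝ => ENNReal.ofReal ((1 / (2 * v)) * Real.exp (-|t - m| / v)))
      = fun t => ENNReal.ofReal (lapd m v t) := rfl
  rw [h2, h1, ENNReal.toReal_ofReal (setIntegral_nonneg hA fun t _ => (lapd_pos hv m t).le)]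

lemma lap_map {v : ℝ} {A : Set ℝ} (hA : MeasurableSet A) (m : ℝ) :
    laplaceMeasure m v (Neg.neg ⁻¹' A) = laplaceMeasure (-m) v A := by
  rw [laplaceMeasure, laplaceMeasure, withDensity_apply _ (hA.preimage measurable_neg),
    withDensity_apply _ hA]
  have hmeas : Measurable fun t : ℝ => ENNReal.ofReal ((1 / (2 * v)) * Real.exp (-|t - (-m)| / v)) :=
    ((lapd_cont (-m) v).measurable).ennreal_ofReal
  have key := setLIntegral_map (μ := (volume : Measure ℝ)) hA hmeas measurable_neg
  rw [Measure.map_neg_eq_self (volume : Measure ℝ)] at key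
  rw [key]
  apply lintegral_congr_ae
  apply Filter.Eventually.of_forall
  intro x
  have : lapd (-m) v (-x) = lapd m v x := lapd_neg m v x
  unfold lapd at this
  simp only [this]

lemma Egamma_reflect (v γ m₁ m₂ : ℝ) :
    Egamma γ (laplaceMeasure m₁ v) (laplaceMeasure m₂ v)
      = Egamma γ (laplaceMeasure (-m₁) v) (laplaceMeasure (-m₂) v) := by
  unfold Egamma
  rw [iSup, iSup]
  congr 1
  apply Set.Subset.antisymm
  · rintro x ⟨A, rfl⟩
    refine ⟨⟨Neg.neg ⁻¹' A.1, A.2.preimage measurable_neg⟩, ?_⟩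
    simp only
    rw [show (-m₁ : ℝ) = -(m₁) by ring, lap_map A.2 (-m₁), lap_map A.2 (-m₂), neg_neg, neg_neg]
  · rintro x ⟨A, rfl⟩
    refine ⟨⟨Neg.neg ⁻¹' A.1, A.2.preimage measurable_neg⟩, ?_⟩
    simp only
    rw [lap_map A.2 m₁, lap_map A.2 m₂]

lemma main_aux (m₁ m₂ v γ : ℝ) (hv : 0 < v) (hγ : 1 ≤ γ) (hm : m₂ ≤ m₁) :
    Egamma γ (laplaceMeasure m₁ v) (laplaceMeasure m₂ v) =
      max 0 (1 - Real.exp ((v * Real.log γ - |m₁ - m₂|) / (2 * v))) := by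
  have hγ0 : (0:ℝ) < γ := lt_of_lt_of_le one_pos hγ
  set c := v * Real.log γ with hc
  have hc0 : 0 ≤ c := mul_nonneg hv.le (Real.log_nonneg hγ)
  have habs : |m₁ - m₂| = m₁ - m₂ := abs_of_nonneg (by linarith)
  have hexpc : Real.exp (c / v) = γ := by
    rw [hc, mul_comm, mul_div_assoc, div_self hv.ne', mul_one, Real.exp_log hγ0]
  haveI : Nonempty {A : Set ℝ // MeasurableSet A} := ⟨⟨∅, MeasurableSet.empty⟩⟩
  have keyγ : ∀ t, γ * lapd m₂ v t = (1/(2*v)) * Real.exp ((c - |t - m₂|) / v) := by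
    intro t
    rw [← hexpc]
    unfold lapd
    rw [show (c - |t - m₂|)/v = c/v + (-|t - m₂|)/v by ring, Real.exp_add]
    ring
  have ratio : ∀ t, (lapd m₁ v t ≤ γ * lapd m₂ v t ↔ |t - m₂| - |t - m₁| ≤ c) := by
    intro t
    rw [keyγ t]
    unfold lapd
    rw [mul_le_mul_iff_right₀ (by positivity : (0:ℝ) < 1/(2*v)), Real.exp_le_exp,
      div_le_div_iff₀ hv hv]
    constructor <;> intro h <;> nlinarith
  have ratio' : ∀ t, (γ * lapd m₂ v t ≤ lapd m₁ v t ↔ c ≤ |t - m₂| - |t - m₁|) := by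
    intro t
    rw [keyγ t]
    unfold lapd
    rw [mul_le_mul_iff_right₀ (by positivity : (0:ℝ) < 1/(2*v)), Real.exp_le_exp,
      div_le_div_iff₀ hv hv]
    constructor <;> intro h <;> nlinarith
  have hInt : Integrable (fun t => lapd m₁ v t - γ * lapd m₂ v t) :=
    (integrable_lapd hv m₁).sub ((integrable_lapd hv m₂).const_mul γ)
  have val : ∀ A : Set ℝ, MeasurableSet A →
      ((laplaceMeasure m₁ v) A).toReal - γ * ((laplaceMeasure m₂ v) A).toReal
        = ∫ t in A, (lapd m₁ v t - γ * lapd m₂ v t) := by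
    intro A hA
    rw [lap_apply hv hA, lap_apply hv hA, eq_comm,
      integral_sub ((integrable_lapd hv m₁).integrableOn)
        (((integrable_lapd hv m₂).const_mul γ).integrableOn),
      integral_const_mul γ _]
  rcases le_or_gt (m₁ - m₂) c with hcase | hcase
  · -- everything is nonpositive; sup = 0
    have hle : ∀ t, lapd m₁ v t - γ * lapd m₂ v t ≤ 0 := by
      intro t
      rw [sub_nonpos]
      apply (ratio t).2
      have h1 : |t - m₂| - |t - m₁| ≤ |m₁ - m₂| := by
        have h2 := abs_sub_abs_le_abs_sub (t - m₂) (t - m₁)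
        rw [show t - m₂ - (t - m₁) = m₁ - m₂ by ring] at h2
        exact h2
      rw [habs] at h1
      linarith
    have hub : ∀ A : {A : Set ℝ // MeasurableSet A},
        ((laplaceMeasure m₁ v) A.1).toReal - γ * ((laplaceMeasure m₂ v) A.1).toReal ≤ 0 := by
      intro A
      rw [val A.1 A.2]
      exact integral_nonpos hle
    have hmax : max 0 (1 - Real.exp ((c - |m₁ - m₂|) / (2*v))) = 0 := by
      apply max_eq_left
      have h1 : (0:ℝ) ≤ (c - |m₁ - m₂|) / (2*v) := by
        apply div_nonneg _ (by linarith)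
        rw [habs]; linarith
      have := Real.one_le_exp h1
      linarith
    rw [hmax]
    unfold Egamma
    apply le_antisymm (ciSup_le hub)
    refine le_ciSup_of_le ⟨0, ?_⟩ ⟨∅, MeasurableSet.empty⟩ ?_
    · rintro x ⟨A, rfl⟩; exact hub A
    · simp
  · -- main case: optimal set is Ioi t₀
    set t₀ := (m₁ + m₂ + c) / 2 with ht₀
    have h1 : t₀ < m₁ := by rw [ht₀]; linarith
    have h2 : m₂ < t₀ := by rw [ht₀]; linarith
    have fge : ∀ t ∈ Ioi t₀, 0 ≤ lapd m₁ v t - γ * lapd m₂ v t := by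
      intro t ht
      rw [Set.mem_Ioi] at ht
      rw [sub_nonneg]
      apply (ratio' t).2
      rw [abs_of_nonneg (by linarith : (0:ℝ) ≤ t - m₂)]
      rcases le_or_gt t m₁ with h | h
      · rw [abs_of_nonpos (by linarith : t - m₁ ≤ 0)]
        rw [ht₀] at ht; linarith
      · rw [abs_of_nonneg (by linarith : (0:ℝ) ≤ t - m₁)]; linarith
    have fle : ∀ t, t ≤ t₀ → lapd m₁ v t - γ * lapd m₂ v t ≤ 0 := by
      intro t ht
      rw [sub_nonpos]
      apply (ratio t).2
      rw [abs_of_nonpos (by linarith : t - m₁ ≤ 0)]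
      rcases le_or_gt m₂ t with h | h
      · rw [abs_of_nonneg (by linarith : (0:ℝ) ≤ t - m₂)]
        rw [ht₀] at ht; linarith
      · rw [abs_of_nonpos (by linarith : t - m₂ ≤ 0)]; linarith
    have hEval : ∫ t in Ioi t₀, (lapd m₁ v t - γ * lapd m₂ v t)
        = 1 - Real.exp ((c - (m₁ - m₂)) / (2*v)) := by
      rw [integral_sub ((integrable_lapd hv m₁).integrableOn)
        (((integrable_lapd hv m₂).const_mul γ).integrableOn),
        integral_const_mul γ _, integral_Ioi_left hv h1.le, integral_Ioi_right hv h2.le]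
      have e1 : (t₀ - m₁)/v = (c - (m₁ - m₂))/(2*v) := by
        rw [ht₀]; field_simp; ring
      have e2 : γ * Real.exp ((m₂ - t₀)/v) = Real.exp ((c - (m₁ - m₂))/(2*v)) := by
        rw [← hexpc, ← Real.exp_add]
        congr 1
        rw [ht₀]; field_simp; ring
      rw [e1]
      rw [show γ * ((1:ℝ)/2 * Real.exp ((m₂ - t₀)/v))
          = (1/2) * (γ * Real.exp ((m₂ - t₀)/v)) by ring, e2]
      ring
    have hpos : 0 ≤ 1 - Real.exp ((c - (m₁ - m₂))/(2*v)) := by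
      have hle0 : (c - (m₁ - m₂))/(2*v) ≤ 0 :=
        div_nonpos_of_nonpos_of_nonneg (by linarith) (by linarith)
      have := Real.exp_le_one_iff.2 hle0
      linarith
    have hub : ∀ A : {A : Set ℝ // MeasurableSet A},
        ((laplaceMeasure m₁ v) A.1).toReal - γ * ((laplaceMeasure m₂ v) A.1).toReal
          ≤ 1 - Real.exp ((c - (m₁ - m₂))/(2*v)) := by
      intro A
      rw [val A.1 A.2, ← hEval]
      have hsplit := integral_inter_add_diff (μ := (volume : Measure ℝ)) (s := A.1)
        (t := Ioi t₀) (f := fun t => lapd m₁ v t - γ * lapd m₂ v t)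
        measurableSet_Ioi hInt.integrableOn
      rw [← hsplit]
      have hA1 : ∫ t in A.1 \ Ioi t₀, (lapd m₁ v t - γ * lapd m₂ v t) ≤ 0 := by
        apply setIntegral_nonpos (A.2.diff measurableSet_Ioi)
        intro t ht
        exact fle t (le_of_not_gt ht.2)
      have hA2 : ∫ t in A.1 ∩ Ioi t₀, (lapd m₁ v t - γ * lapd m₂ v t)
          ≤ ∫ t in Ioi t₀, (lapd m₁ v t - γ * lapd m₂ v t) := by
        apply setIntegral_mono_set hInt.integrableOn
        · rw [EventuallyLE, ae_restrict_iff' measurableSet_Ioi]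
          exact Filter.Eventually.of_forall fge
        · exact HasSubset.Subset.eventuallyLE Set.inter_subset_right
      linarith
    have hmax : max 0 (1 - Real.exp ((c - |m₁ - m₂|)/(2*v)))
        = 1 - Real.exp ((c - (m₁ - m₂))/(2*v)) := by
      rw [habs]; exact max_eq_right hpos
    rw [hmax]
    unfold Egamma
    apply le_antisymm (ciSup_le hub)
    refine le_ciSup_of_le ⟨1 - Real.exp ((c - (m₁ - m₂))/(2*v)), ?_⟩
      ⟨Ioi t₀, measurableSet_Ioi⟩ ?_
    · rintro x ⟨A, rfl⟩; exact hub A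
    · rw [val _ measurableSet_Ioi, hEval]

end LapAux

/-- The `E_γ`-divergence between two Laplace distributions with the same
scale `v`:  `E_γ(L(m₁,v) ‖ L(m₂,v)) = [1 − exp((v log γ − |m₁ − m₂|)/(2v))]₊`. -/
theorem Egamma_laplace (m₁ m₂ v γ : ℝ) (hv : 0 < v) (hγ : 1 ≤ γ) :
    Egamma γ (laplaceMeasure m₁ v) (laplaceMeasure m₂ v) =
      max 0 (1 - Real.exp ((v * Real.log γ - |m₁ - m₂|) / (2 * v))) := by
  rcases le_total m₂ m₁ with h | h
  · exact LapAux.main_aux m₁ m₂ v γ hv hγ h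
  · rw [LapAux.Egamma_reflect, LapAux.main_aux (-m₁) (-m₂) v γ hv hγ (by linarith)]
    have habs : |(-m₁) - (-m₂)| = |m₁ - m₂| := by
      rw [show (-m₁) - (-m₂) = -(m₁ - m₂) by ring, abs_neg]
    rw [habs]
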